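/- Let α be a composition of n, τ a standard reverse composition tableau of shape α, and let τ̇ = S(τ) be the filling produced by the paper's sink algorithm. Then τ̇ is a standard reverse composition tableau of shape α, is equivalent to τ (same standardized column words in every column), and is a sink tableau: every descent of τ̇ is attacking. -/

import Mathlib

/-- The composition diagram `cd(α)`: boxes `(i,j)` (row `i` from the top, column
`j` from the left) with `1 ≤ i ≤ ℓ(α)` and `1 ≤ j ≤ αᵢ`. -/
def cdFinset (α : List ℕ) : Finset (ℕ × ℕ) :=
  (Finset.range α.length).biUnion fun i =>
    (Finset.Icc 1 (α.getD i 0)).image fun j => (i + 1, j)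

/-- The defining conditions of a standard reverse composition tableau of shape
`α` (besides being a bijective filling by `1,…,n`): rows strictly decrease left
to right, the first column strictly increases top to bottom, and the triple
condition holds. -/
def IsSRCT (α : List ℕ) (τ : ℕ × ℕ → ℕ) : Prop :=
  (∀ i j : ℕ, (i, j) ∈ cdFinset α → (i, j + 1) ∈ cdFinset α →
    τ (i, j + 1) < τ (i, j)) ∧
  (∀ i i' : ℕ, i < i' → (i, 1) ∈ cdFinset α → (i', 1) ∈ cdFinset α →
    τ (i, 1) < τ (i', 1)) ∧
  (∀ i j k : ℕ, i < j → (i, k) ∈ cdFinset α → (j, k + 1) ∈ cdFinset α →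
    τ (j, k + 1) < τ (i, k) →
    ((i, k + 1) ∈ cdFinset α ∧ τ (j, k + 1) < τ (i, k + 1)))

/-- `τ` is a sink tableau: every descent is attacking.  A value `m` is a descent
when `m+1` sits weakly right of `m`; it is attacking if `m` and `m+1` are in the
same column or in adjacent columns with `m+1` lower-right of `m`. -/
def IsSinkSRCT (α : List ℕ) (τ : ℕ × ℕ → ℕ) : Prop :=
  ∀ b b' : ℕ × ℕ, b ∈ cdFinset α → b' ∈ cdFinset α →
    τ b' = τ b + 1 → b.2 ≤ b'.2 →
    (b'.2 = b.2 ∨ (b'.2 = b.2 + 1 ∧ b.1 < b'.1))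

/-- First element of a chain: the box of greatest entry in the leftmost column
containing an available box. -/
def ChainStart (A : Set (ℕ × ℕ)) (τ : ℕ × ℕ → ℕ) (b : ℕ × ℕ) : Prop :=
  b ∈ A ∧ (∀ c ∈ A, b.2 ≤ c.2) ∧ (∀ c ∈ A, c.2 = b.2 → τ c ≤ τ b)

/-- Chain step: if the next column contains an available entry greater than the
current one and placed below it, move to the box of greatest available entry in
that column. -/
def ChainStep (A : Set (ℕ × ℕ)) (τ : ℕ × ℕ → ℕ) (b b' : ℕ × ℕ) : Prop :=
  b' ∈ A ∧ b'.2 = b.2 + 1 ∧ (∀ c ∈ A, c.2 = b.2 + 1 → τ c ≤ τ b') ∧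
  (∃ c ∈ A, c.2 = b.2 + 1 ∧ τ b < τ c ∧ b.1 < c.1)

/-- Chain termination: no available entry in the next column is greater than the
current entry and placed below it. -/
def ChainEnd (A : Set (ℕ × ℕ)) (τ : ℕ × ℕ → ℕ) (b : ℕ × ℕ) : Prop :=
  ¬ ∃ c ∈ A, c.2 = b.2 + 1 ∧ τ b < τ c ∧ b.1 < c.1

/-- A maximal greedy chain (the sequence `a₁,…,a_l` of the algorithm). -/
def IsGreedyChain (A : Set (ℕ × ℕ)) (τ : ℕ × ℕ → ℕ) (ch : List (ℕ × ℕ)) : Prop :=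
  ch ≠ [] ∧
  (∀ h : ch ≠ [], ChainStart A τ (ch.head h)) ∧
  (∀ k, ∀ h : k + 1 < ch.length,
    ChainStep A τ (ch.get ⟨k, Nat.lt_of_succ_lt h⟩) (ch.get ⟨k + 1, h⟩)) ∧
  (∀ h : ch ≠ [], ChainEnd A τ (ch.getLast h))

/-- The boxes still available at stage `m` (positions of entries `> m` have been
starred out). -/
def availOf (α : List ℕ) {n : ℕ} (pos : Fin n → ℕ × ℕ) (m : Fin n) : Set (ℕ × ℕ) :=
  {p | p ∈ cdFinset α ∧ ∀ m' : Fin n, m < m' → pos m' ≠ p}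

/-- The sink algorithm: `τ'` is obtained from `τ` by placing `n` at
`(ℓ(α), 1)` and, for `m = n-1, …, 1`, placing `m` at the last box of the maximal
greedy chain through `τ` restricted to the still-available boxes. -/
def SinkAlgo (α : List ℕ) (n : ℕ) (τ τ' : ℕ × ℕ → ℕ) : Prop :=
  (∀ p, p ∉ cdFinset α → τ' p = 0) ∧
  ∃ pos : Fin n → ℕ × ℕ,
    Function.Injective pos ∧
    (∀ m, pos m ∈ cdFinset α) ∧
    (∀ m : Fin n, τ' (pos m) = (m : ℕ) + 1) ∧
    (∀ hn : 0 < n, pos ⟨n - 1, by omega⟩ = (α.length, 1)) ∧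
    (∀ m : Fin n, (m : ℕ) + 1 < n →
      ∃ ch : List (ℕ × ℕ), IsGreedyChain (availOf α pos m) τ ch ∧
        ch.getLast? = some (pos m))

section Aux

lemma sum_getD_aux (l : List ℕ) :
    ∑ i ∈ Finset.range l.length, l.getD i 0 = l.sum := by
  induction l with
  | nil => simp
  | cons a t ih =>
      rw [List.length_cons, Finset.sum_range_succ']
      simp only [List.getD_cons_succ, List.getD_cons_zero, List.sum_cons, ih]
      omega

lemma cd_card_aux (α : List ℕ) : (cdFinset α).card = α.sum := by
  rw [cdFinset, Finset.card_biUnion]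
  · rw [← sum_getD_aux α]
    refine Finset.sum_congr rfl fun i _ => ?_
    rw [Finset.card_image_of_injective _ (fun a b hab => by
      simpa using hab)]
    rw [Nat.card_Icc]
    omega
  · intro i _ j _ hij
    rw [Function.onFun, Finset.disjoint_left]
    intro p hp hq
    obtain ⟨a, -, rfl⟩ := Finset.mem_image.1 hp
    obtain ⟨b, -, hb⟩ := Finset.mem_image.1 hq
    have : j + 1 = i + 1 := congrArg Prod.fst hb
    omega

lemma mem_cd_bounds {α : List ℕ} {p : ℕ × ℕ} (hp : p ∈ cdFinset α) :
    1 ≤ p.1 ∧ p.1 ≤ α.length ∧ 1 ≤ p.2 := by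
  simp only [cdFinset, Finset.mem_biUnion, Finset.mem_range, Finset.mem_image,
    Finset.mem_Icc] at hp
  obtain ⟨i, hi, j, hj, rfl⟩ := hp
  exact ⟨by omega, by omega, hj.1⟩

variable {A : Set (ℕ × ℕ)} {τ : ℕ × ℕ → ℕ} {ch : List (ℕ × ℕ)}

lemma chain_elem (hch : IsGreedyChain A τ ch) :
    ∀ k (h : k < ch.length), ch.get ⟨k, h⟩ ∈ A ∧
      ∀ c ∈ A, c.2 = (ch.get ⟨k, h⟩).2 → τ c ≤ τ (ch.get ⟨k, h⟩) := by
  intro k h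
  cases k with
  | zero =>
      have hs := hch.2.1 hch.1
      rw [List.get_mk_zero h]
      exact ⟨hs.1, hs.2.2⟩
  | succ k =>
      have hs := hch.2.2.1 k h
      refine ⟨hs.1, fun c hc hcol => hs.2.2.1 c hc (hcol.trans hs.2.1)⟩

lemma chain_col (hch : IsGreedyChain A τ ch) :
    ∀ k (h : k < ch.length) (h0 : 0 < ch.length),
      (ch.get ⟨k, h⟩).2 = (ch.get ⟨0, h0⟩).2 + k := by
  intro k
  induction k with
  | zero => intro h h0; rfl
  | succ k ih =>
      intro h h0
      have hs := hch.2.2.1 k h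
      rw [hs.2.1, ih (Nat.lt_of_succ_lt h) h0]
      omega

lemma chain_step_lt (hch : IsGreedyChain A τ ch) (k : ℕ) (h : k + 1 < ch.length) :
    τ (ch.get ⟨k, Nat.lt_of_succ_lt h⟩) < τ (ch.get ⟨k + 1, h⟩) := by
  have hs := hch.2.2.1 k h
  obtain ⟨c, hc, hcol, hlt, -⟩ := hs.2.2.2
  exact lt_of_lt_of_le hlt (hs.2.2.1 c hc hcol)

lemma chain_le (hch : IsGreedyChain A τ ch) :
    ∀ k k' (hk : k ≤ k') (h' : k' < ch.length),
      τ (ch.get ⟨k, lt_of_le_of_lt hk h'⟩) ≤ τ (ch.get ⟨k', h'⟩) := by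
  intro k k' hk
  induction k' with
  | zero =>
      intro h'
      interval_cases k
      exact le_refl _
  | succ k' ih =>
      intro h'
      rcases Nat.lt_or_ge k (k' + 1) with hlt | hge
      · have hk' : k ≤ k' := by omega
        calc τ (ch.get ⟨k, lt_of_le_of_lt hk h'⟩)
            = τ (ch.get ⟨k, lt_of_le_of_lt hk' (Nat.lt_of_succ_lt h')⟩) := rfl
          _ ≤ τ (ch.get ⟨k', Nat.lt_of_succ_lt h'⟩) := ih hk' (Nat.lt_of_succ_lt h')
          _ ≤ τ (ch.get ⟨k' + 1, h'⟩) := le_of_lt (chain_step_lt hch k' h')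
      · have : k = k' + 1 := by omega
        subst this
        exact le_refl _

lemma chain_last_max (hch : IsGreedyChain A τ ch) (hne : ch ≠ []) :
    ∀ c ∈ A, c.2 ≤ (ch.getLast hne).2 → τ c ≤ τ (ch.getLast hne) := by
  have h0 : 0 < ch.length := List.length_pos_iff.2 hne
  have hlast : ch.getLast hne = ch.get ⟨ch.length - 1, by omega⟩ :=
    List.getLast_eq_getElem hne
  intro c hc hcol
  have hhead : (ch.get ⟨0, h0⟩).2 ≤ c.2 := by
    rw [List.get_mk_zero h0]
    exact (hch.2.1 hne).2.1 c hc
  have hlcol : (ch.get ⟨ch.length - 1, by omega⟩).2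
      = (ch.get ⟨0, h0⟩).2 + (ch.length - 1) := chain_col hch _ _ h0
  rw [hlast] at hcol ⊢
  have hklen : c.2 - (ch.get ⟨0, h0⟩).2 ≤ ch.length - 1 := by omega
  have hkl : c.2 - (ch.get ⟨0, h0⟩).2 < ch.length := by omega
  have hcolk : (ch.get ⟨c.2 - (ch.get ⟨0, h0⟩).2, hkl⟩).2 = c.2 := by
    have := chain_col hch (c.2 - (ch.get ⟨0, h0⟩).2) hkl h0
    omega
  calc τ c ≤ τ (ch.get ⟨c.2 - (ch.get ⟨0, h0⟩).2, hkl⟩) :=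
        (chain_elem hch _ hkl).2 c hc hcolk.symm
    _ ≤ τ (ch.get ⟨ch.length - 1, by omega⟩) := by
        have := chain_le hch (c.2 - (ch.get ⟨0, h0⟩).2) (ch.length - 1) hklen (by omega)
        exact this

end Aux

/-- The output `τ̇` of the sink algorithm applied to an SRCT `τ` of shape `α` is
an SRCT of shape `α`, is equivalent to `τ` (same standardized column words,
i.e. the same relative order within every column), and is a sink tableau. -/
theorem sink_algorithm_correct (α : List ℕ) (n : ℕ)
    (hα : ∀ x ∈ α, 0 < x) (hn : α.sum = n)
    (τ : ℕ × ℕ → ℕ) (hbij : Set.BijOn τ ↑(cdFinset α) (Set.Icc 1 n))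
    (hτ : IsSRCT α τ)
    (τ' : ℕ × ℕ → ℕ) (halg : SinkAlgo α n τ τ') :
    Set.BijOn τ' ↑(cdFinset α) (Set.Icc 1 n) ∧
    IsSRCT α τ' ∧
    (∀ b b' : ℕ × ℕ, b ∈ cdFinset α → b' ∈ cdFinset α → b.2 = b'.2 →
      (τ b < τ b' ↔ τ' b < τ' b')) ∧
    IsSinkSRCT α τ' := by
  classical
  obtain ⟨hzero, pos, hinj, hmem, hval, hlastpos, hchain⟩ := halg
  have hcard : (cdFinset α).card = n := by rw [cd_card_aux]; exact hn
  have hsurj : ∀ p ∈ cdFinset α, ∃ m : Fin n, pos m = p := by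
    intro p hp
    have himg : Finset.image pos Finset.univ = cdFinset α := by
      apply Finset.eq_of_subset_of_card_le
      · intro q hq
        obtain ⟨m, -, rfl⟩ := Finset.mem_image.1 hq
        exact hmem m
      · rw [Finset.card_image_of_injective _ hinj, Finset.card_univ, Fintype.card_fin, hcard]
    rw [← himg] at hp
    obtain ⟨m, -, hm⟩ := Finset.mem_image.1 hp
    exact ⟨m, hm⟩
  have hτinj : Set.InjOn τ ↑(cdFinset α) := hbij.2.1
  have hgetlast : ∀ (ch : List (ℕ × ℕ)) (hne : ch ≠ []) (p : ℕ × ℕ),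
      ch.getLast? = some p → ch.getLast hne = p := by
    intro ch hne p hp
    rw [List.getLast?_eq_getLast hne] at hp
    exact Option.some_injective _ hp
  have hAof : ∀ (a c : Fin n), (a : ℕ) ≤ (c : ℕ) → pos a ∈ availOf α pos c := by
    intro a c hac
    refine ⟨hmem a, fun m' hm' he => ?_⟩
    have h1 : (c : ℕ) < (m' : ℕ) := hm'
    have h2 : m' = a := hinj he
    rw [h2] at h1
    omega
  have hAstep' : ∀ (m m2 : Fin n), (m2 : ℕ) = (m : ℕ) + 1 →
      ∀ p, p ∈ availOf α pos m2 → p ≠ pos m2 → p ∈ availOf α pos m := by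
    intro m m2 hm2v p hp hne
    refine ⟨hp.1, fun m' hm' he => ?_⟩
    have h1 : (m : ℕ) < (m' : ℕ) := hm'
    rcases eq_or_lt_of_le (show (m2 : ℕ) ≤ (m' : ℕ) by omega) with heq | hlt
    · have h2 : m2 = m' := Fin.ext heq
      rw [← h2] at he
      exact hne he.symm
    · exact hp.2 m' hlt he
  have hposlast : ∀ m : Fin n, (m : ℕ) = n - 1 → pos m = (α.length, 1) := by
    intro m hmn
    have h0n : 0 < n := lt_of_le_of_lt (Nat.zero_le _) m.isLt
    have hx : (⟨n - 1, by omega⟩ : Fin n) = m := Fin.ext (by simp [hmn])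
    rw [← hx]
    exact hlastpos h0n
  have KM : ∀ m : Fin n, ∀ c ∈ availOf α pos m, c.2 ≤ (pos m).2 → τ c ≤ τ (pos m) := by
    intro m c hc hcol
    by_cases hcase : (m : ℕ) + 1 < n
    · obtain ⟨ch, hch, hl⟩ := hchain m hcase
      have hlast : ch.getLast hch.1 = pos m := hgetlast ch hch.1 _ hl
      rw [← hlast] at hcol ⊢
      exact chain_last_max hch hch.1 c hc hcol
    · have hmn : (m : ℕ) = n - 1 := by have := m.isLt; omega
      have hpm : pos m = (α.length, 1) := hposlast m hmn
      have hbnd := mem_cd_bounds hc.1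
      rw [hpm] at hcol ⊢
      have hc2 : c.2 = 1 := le_antisymm hcol hbnd.2.2
      have hceq : c = (c.1, 1) := Prod.ext rfl hc2
      rcases eq_or_lt_of_le hbnd.2.1 with heq | hlt
      · rw [hceq, heq]
      · have hlt2 := hτ.2.1 c.1 α.length hlt (by rw [← hceq]; exact hc.1)
          (by rw [← hpm]; exact hmem m)
        rw [hceq]
        exact le_of_lt hlt2
  have KE : ∀ m : Fin n, ∀ c ∈ availOf α pos m, c.2 = (pos m).2 + 1 →
      (pos m).1 < c.1 → τ c ≤ τ (pos m) := by
    intro m c hc hcol hrow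
    by_cases hcase : (m : ℕ) + 1 < n
    · obtain ⟨ch, hch, hl⟩ := hchain m hcase
      have hlast : ch.getLast hch.1 = pos m := hgetlast ch hch.1 _ hl
      have hend := hch.2.2.2 hch.1
      rw [hlast] at hend
      by_contra hlt
      exact hend ⟨c, hc, hcol, by omega, hrow⟩
    · have hmn : (m : ℕ) = n - 1 := by have := m.isLt; omega
      have hpm : pos m = (α.length, 1) := hposlast m hmn
      have hbnd := mem_cd_bounds hc.1
      rw [hpm] at hrow
      exact absurd hbnd.2.1 (by simp only at hrow; omega)
  have hbij' : Set.BijOn τ' ↑(cdFinset α) (Set.Icc 1 n) := by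
    refine ⟨?_, ?_, ?_⟩
    · intro p hp
      obtain ⟨m, rfl⟩ := hsurj p hp
      simp only [Set.mem_Icc, hval m]
      have := m.isLt
      omega
    · intro p hp q hq he
      obtain ⟨a, rfl⟩ := hsurj p hp
      obtain ⟨b, rfl⟩ := hsurj q hq
      rw [hval a, hval b] at he
      have hab : a = b := Fin.ext (by omega)
      rw [hab]
    · intro v hv
      obtain ⟨h1, h2⟩ := Set.mem_Icc.1 hv
      refine ⟨pos ⟨v - 1, by omega⟩, hmem _, ?_⟩
      rw [hval]
      simp only
      omega
  have key3 : ∀ b b' : ℕ × ℕ, b ∈ cdFinset α → b' ∈ cdFinset α → b.2 = b'.2 →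
      (τ b < τ b' ↔ τ' b < τ' b') := by
    have main : ∀ (a c : Fin n), (a : ℕ) < (c : ℕ) → (pos a).2 = (pos c).2 →
        τ (pos a) < τ (pos c) := by
      intro a c hac hcol
      have hA : pos a ∈ availOf α pos c := hAof a c (le_of_lt hac)
      have hle : τ (pos a) ≤ τ (pos c) := KM c _ hA (le_of_eq hcol)
      refine lt_of_le_of_ne hle (fun h => ?_)
      have : pos a = pos c := hτinj (hmem a) (hmem c) h
      have := hinj this
      rw [this] at hac
      omega
    intro b b' hb hb' hcol
    obtain ⟨a, rfl⟩ := hsurj b hb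
    obtain ⟨c, rfl⟩ := hsurj b' hb'
    rw [hval a, hval c]
    constructor
    · intro h
      rcases lt_trichotomy (a : ℕ) (c : ℕ) with hlt | heq | hgt
      · omega
      · rw [Fin.ext heq] at h
        exact absurd h (lt_irrefl _)
      · exact absurd (main c a hgt hcol.symm) (by omega)
    · intro h
      exact main a c (by omega) hcol
  have hsrct' : IsSRCT α τ' := by
    refine ⟨?_, ?_, ?_⟩
    · intro i j h1 h2
      obtain ⟨m1, hm1⟩ := hsurj _ h1
      obtain ⟨m2, hm2⟩ := hsurj _ h2
      rw [← hm1, ← hm2, hval, hval]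
      have hne12 : m1 ≠ m2 := by
        intro h
        have : ((i, j) : ℕ × ℕ) = (i, j + 1) := by rw [← hm1, h, hm2]
        simp only [Prod.mk.injEq] at this
        omega
      have hnotlt : ¬ (m1 : ℕ) < (m2 : ℕ) := by
        intro hlt
        have hA : pos m1 ∈ availOf α pos m2 := hAof m1 m2 (le_of_lt hlt)
        have hle := KM m2 _ hA (by rw [hm1, hm2]; simp)
        rw [hm1, hm2] at hle
        exact absurd (hτ.1 i j h1 h2) (by omega)
      have hvne : (m1 : ℕ) ≠ (m2 : ℕ) := fun h => hne12 (Fin.ext h)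
      omega
    · intro i i' hii' h1 h1'
      exact (key3 (i, 1) (i', 1) h1 h1' rfl).1 (hτ.2.1 i i' hii' h1 h1')
    · intro i j k hij hik hjk1 hlt'
      obtain ⟨m, hm⟩ := hsurj _ hjk1
      obtain ⟨M, hM⟩ := hsurj _ hik
      rw [← hm, ← hM, hval, hval] at hlt'
      have hmM : (m : ℕ) < (M : ℕ) := by omega
      have hcA : pos m ∈ availOf α pos M := hAof m M (le_of_lt hmM)
      have hle : τ (j, k + 1) ≤ τ (i, k) := by
        have := KE M (pos m) hcA (by rw [hm, hM]) (by rw [hm, hM]; exact hij)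
        rwa [hm, hM] at this
      have hlt : τ (j, k + 1) < τ (i, k) := by
        refine lt_of_le_of_ne hle (fun h => ?_)
        have := hτinj hjk1 hik h
        simp only [Prod.mk.injEq] at this
        omega
      obtain ⟨hik1, hτ2⟩ := hτ.2.2 i j k hij hik hjk1 hlt
      refine ⟨hik1, ?_⟩
      obtain ⟨M', hM'⟩ := hsurj _ hik1
      rw [← hm, ← hM', hval, hval]
      have hne : (M' : ℕ) ≠ (m : ℕ) := by
        intro h
        rw [Fin.ext h, hm] at hM'
        simp only [Prod.mk.injEq] at hM'
        omega
      by_contra hcon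
      have hM'm : (M' : ℕ) < (m : ℕ) := by omega
      have hA2 : pos M' ∈ availOf α pos m := hAof M' m (le_of_lt hM'm)
      have hle2 := KM m _ hA2 (by rw [hM', hm])
      rw [hM', hm] at hle2
      omega
  have hsink : IsSinkSRCT α τ' := by
    intro b b' hb hb' hvv hcol
    obtain ⟨m, hm⟩ := hsurj b hb
    obtain ⟨m2, hm2⟩ := hsurj b' hb'
    rw [← hm, ← hm2, hval, hval] at hvv
    have hm2v : (m2 : ℕ) = (m : ℕ) + 1 := by omega
    by_cases hcase : (m2 : ℕ) + 1 < n
    · obtain ⟨ch, hch, hl⟩ := hchain m2 hcase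
      have hne := hch.1
      have h0 : 0 < ch.length := List.length_pos_iff.2 hne
      have hlast : ch.getLast hne = b' := by rw [hgetlast ch hne _ hl, hm2]
      by_cases hcc : b'.2 = b.2
      · exact Or.inl hcc
      right
      have hltc : b.2 < b'.2 := lt_of_le_of_ne hcol (fun h => hcc h.symm)
      have hbA2 : b ∈ availOf α pos m2 := by
        rw [← hm]
        exact hAof m m2 (by omega)
      have hhead : (ch.get ⟨0, h0⟩).2 ≤ b.2 := by
        rw [List.get_mk_zero h0]
        exact (hch.2.1 hne).2.1 b hbA2
      have hlastget : ch.getLast hne = ch.get ⟨ch.length - 1, by omega⟩ :=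
        List.getLast_eq_getElem hne
      have hb'col : b'.2 = (ch.get ⟨0, h0⟩).2 + (ch.length - 1) := by
        rw [← hlast, hlastget]
        exact chain_col hch _ _ h0
      have hk1 : (b.2 - (ch.get ⟨0, h0⟩).2) + 1 < ch.length := by omega
      have hkcol : (ch.get ⟨b.2 - (ch.get ⟨0, h0⟩).2, Nat.lt_of_succ_lt hk1⟩).2 = b.2 := by
        have := chain_col hch (b.2 - (ch.get ⟨0, h0⟩).2) (Nat.lt_of_succ_lt hk1) h0
        omega
      have helem := chain_elem hch (b.2 - (ch.get ⟨0, h0⟩).2) (Nat.lt_of_succ_lt hk1)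
      have hba : τ b ≤ τ (ch.get ⟨b.2 - (ch.get ⟨0, h0⟩).2, Nat.lt_of_succ_lt hk1⟩) :=
        helem.2 b hbA2 hkcol.symm
      have hane : ch.get ⟨b.2 - (ch.get ⟨0, h0⟩).2, Nat.lt_of_succ_lt hk1⟩ ≠ b' := by
        intro h
        rw [h] at hkcol
        omega
      have haA : ch.get ⟨b.2 - (ch.get ⟨0, h0⟩).2, Nat.lt_of_succ_lt hk1⟩ ∈ availOf α pos m :=
        hAstep' m m2 hm2v _ helem.1 (by rw [hm2]; exact hane)
      have hab : τ (ch.get ⟨b.2 - (ch.get ⟨0, h0⟩).2, Nat.lt_of_succ_lt hk1⟩) ≤ τ b := by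
        have := KM m _ haA (by rw [hm]; exact le_of_eq hkcol)
        rwa [hm] at this
      have haeqb : ch.get ⟨b.2 - (ch.get ⟨0, h0⟩).2, Nat.lt_of_succ_lt hk1⟩ = b :=
        hτinj haA.1 hb (le_antisymm hab hba)
      have hs := hch.2.2.1 (b.2 - (ch.get ⟨0, h0⟩).2) hk1
      obtain ⟨c, hcA, hccol, hclt, hcrow⟩ := hs.2.2.2
      rw [haeqb] at hccol hclt hcrow
      by_cases hcb' : c = b'
      · rw [hcb'] at hccol hcrow
        exact ⟨hccol, hcrow⟩
      · exfalso
        have hcAm : c ∈ availOf α pos m := hAstep' m m2 hm2v c hcA (by rw [hm2]; exact hcb')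
        have hce := KE m c hcAm (by rw [hm]; exact hccol) (by rw [hm]; exact hcrow)
        rw [hm] at hce
        omega
    · left
      have hm2n : (m2 : ℕ) = n - 1 := by have := m2.isLt; omega
      have hb'eq : b' = (α.length, 1) := by rw [← hm2, hposlast m2 hm2n]
      rw [hb'eq] at hcol ⊢
      have hbnd := mem_cd_bounds hb
      simp only at hcol ⊢
      omega
  exact ⟨hbij', hsrct', key3, hsink⟩
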